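/- Fix a subset S of the simple roots Π of a semisimple root system. Define an action of W_S (the parabolic subgroup of the Weyl group generated by {s_α : α ∈ S}) on pairs (η, o) where η : S → {±1} and o ∈ {±1}: s_{α_i} sends η to η' with η'_j = η_j η_i^{-C_{j,i}} for α_j ∈ S, and sends o to (η_i)^{r_i} o where r_i = #{α_j ∈ Π∖S : C_{j,i} odd}. Then this is a well-defined group action of W_S, i.e. it respects all Coxeter relations of W_S. -/

import Mathlib

lemma stmt9_ueven (u : ℤˣ) {n : ℤ} (h : Even n) : u ^ n = 1 := by
  obtain ⟨k, rfl⟩ := h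
  rw [← two_mul, zpow_mul, zpow_two, Int.units_mul_self, one_zpow]

lemma stmt9_uodd (u : ℤˣ) {n : ℤ} (h : Odd n) : u ^ n = u := by
  obtain ⟨k, rfl⟩ := h
  rw [zpow_add, zpow_one, zpow_mul, zpow_two, Int.units_mul_self, one_zpow, one_mul]

lemma stmt9_uz2 (u : ℤˣ) : u ^ (2 : ℤ) = 1 := by rw [zpow_two, Int.units_mul_self]

lemma stmt9_odd_two_add {n : ℤ} (h : Odd n) : Odd (2 + n) := by
  obtain ⟨k, rfl⟩ := h; exact ⟨k + 1, by ring⟩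

lemma stmt9_odd_add_two {n : ℤ} (h : Odd n) : Odd (n + 2) := by
  obtain ⟨k, rfl⟩ := h; exact ⟨k + 1, by ring⟩

lemma stmt9_mms (u a : ℤˣ) : u * (u * a) = a := by
  rw [← mul_assoc, Int.units_mul_self, one_mul]

lemma stmt9_nsq (u : ℤˣ) (n : ℕ) : u ^ n * u ^ n = 1 := by
  rw [← pow_add, ← two_mul, pow_mul, sq, Int.units_mul_self, one_pow]

lemma stmt9_nsq' (u a : ℤˣ) (n : ℕ) : u ^ n * (u ^ n * a) = a := by
  rw [← mul_assoc, stmt9_nsq, one_mul]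

lemma stmt9_zsq (u : ℤˣ) (n : ℤ) : u ^ n * u ^ n = 1 := by
  rw [← zpow_add]; exact stmt9_ueven u ⟨n, rfl⟩

lemma stmt9_mul_zsq (a u : ℤˣ) (n : ℤ) : a * u ^ n * u ^ n = a := by
  rw [mul_assoc, stmt9_zsq, mul_one]

section aux

variable {l : ℕ} {C : Matrix (Fin l) (Fin l) ℤ}
    {S : Finset (Fin l)} {r : Fin l → ℕ}
    {T : Fin l → ((Fin l → ℤˣ) × ℤˣ) → ((Fin l → ℤˣ) × ℤˣ)}

lemma stmt9_braid (hdiag : ∀ i, C i i = 2)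
    (hT : ∀ i p, T i p =
      (fun j => if j ∈ S then p.1 j * (p.1 i) ^ (-(C j i)) else p.1 j,
        (p.1 i) ^ (r i) * p.2))
    (i j : Fin l) (hi : i ∈ S) (hj : j ∈ S) (m : ℕ) (a b : ℤ)
    (hA : C i j = a) (hB : C j i = b)
    (hm : (m = 2 ∧ a = 0 ∧ b = 0) ∨ (m = 3 ∧ a = -1 ∧ b = -1) ∨
      (m = 4 ∧ a = -1 ∧ b = -2) ∨ (m = 4 ∧ a = -2 ∧ b = -1)) :
    (T i ∘ T j)^[m] = id := by
  rcases hm with ⟨rfl, rfl, rfl⟩ | ⟨rfl, rfl, rfl⟩ | ⟨rfl, rfl, rfl⟩ | ⟨rfl, rfl, rfl⟩ <;>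
  · funext p
    obtain ⟨η, o⟩ := p
    simp only [Function.iterate_succ, Function.iterate_zero, Function.comp_apply, id_eq,
      Function.comp_id, hT, hi, hj, if_true, hA, hB, hdiag]
    rw [Prod.mk.injEq]
    constructor
    · funext k
      by_cases hk : k ∈ S <;> simp only [hk, if_true, if_false]
      by_cases hKi : Even (C k i) <;> by_cases hKj : Even (C k j) <;>
        [skip; rw [Int.not_even_iff_odd] at hKj;
         rw [Int.not_even_iff_odd] at hKi;
         rw [Int.not_even_iff_odd] at hKi hKj] <;>
        simp [stmt9_ueven, stmt9_uodd, hKi, hKj, even_neg, odd_neg, mul_pow,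
          mul_comm, mul_left_comm, mul_assoc, Int.units_mul_self, stmt9_mms,
          stmt9_nsq, stmt9_nsq']
    · simp [mul_pow, mul_comm, mul_left_comm, mul_assoc, Int.units_mul_self, stmt9_mms,
        stmt9_nsq, stmt9_nsq', stmt9_ueven, stmt9_uodd]

lemma stmt9_braid6 (hdiag : ∀ i, C i i = 2)
    (hT : ∀ i p, T i p =
      (fun j => if j ∈ S then p.1 j * (p.1 i) ^ (-(C j i)) else p.1 j,
        (p.1 i) ^ (r i) * p.2))
    (i j : Fin l) (hi : i ∈ S) (hj : j ∈ S)
    (hA : Odd (C i j)) (hB : Odd (C j i)) :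
    (T i ∘ T j)^[6] = id := by
  set g : ((Fin l → ℤˣ) × ℤˣ) → ((Fin l → ℤˣ) × ℤˣ) :=
    fun p => (fun k => if k ∈ S then p.1 k * (p.1 i) ^ (C k i + C k j) * (p.1 j) ^ (C k j)
      else p.1 k, (p.1 i) ^ (r i + r j) * (p.1 j) ^ (r j) * p.2) with hg
  have hV : (T i ∘ T j) ∘ (T i ∘ T j) = g := by
    funext p
    obtain ⟨η, o⟩ := p
    simp only [Function.comp_apply, hT, hg, hi, hj, if_true, hdiag]
    rw [Prod.mk.injEq]
    constructor
    · funext k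
      by_cases hk : k ∈ S <;> simp only [hk, if_true, if_false]
      rcases Int.units_eq_one_or (η i) with h1 | h1 <;>
      rcases Int.units_eq_one_or (η j) with h2 | h2 <;>
      by_cases hKi : Even (C k i) <;> by_cases hKj : Even (C k j) <;>
        simp -failIfUnchanged only [Int.not_even_iff_odd] at * <;>
        simp [h1, h2, hA, hB, stmt9_ueven, stmt9_uodd, hKi, hKj, even_neg, odd_neg,
          Even.add, Odd.add_even, Even.add_odd, Odd.add_odd, mul_pow,
          mul_comm, mul_left_comm, mul_assoc, Int.units_mul_self, stmt9_mms,
          stmt9_nsq, stmt9_nsq']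
    · rcases Int.units_eq_one_or (η i) with h1 | h1 <;>
      rcases Int.units_eq_one_or (η j) with h2 | h2 <;>
      simp [h1, h2, hA, hB, stmt9_ueven, stmt9_uodd, even_neg, odd_neg, pow_add, mul_pow,
        mul_comm, mul_left_comm, mul_assoc, Int.units_mul_self, stmt9_mms,
        stmt9_nsq, stmt9_nsq']
  have h6 : (T i ∘ T j)^[6] = g ∘ g ∘ g := by
    rw [← hV]
    funext p
    simp only [Function.comp_apply, Function.iterate_succ, Function.iterate_zero,
      Function.comp_apply, Function.comp_id, Function.id_comp, Function.comp, id_eq]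
  rw [h6]
  funext p
  obtain ⟨η, o⟩ := p
  simp only [Function.comp_apply, hg, hi, hj, if_true, hdiag, id_eq]
  rw [Prod.mk.injEq]
  constructor
  · funext k
    by_cases hk : k ∈ S <;> simp only [hk, if_true, if_false]
    rcases Int.units_eq_one_or (η i) with h1 | h1 <;>
    rcases Int.units_eq_one_or (η j) with h2 | h2 <;>
    by_cases hKi : Even (C k i) <;> by_cases hKj : Even (C k j) <;>
      simp -failIfUnchanged only [Int.not_even_iff_odd] at * <;>
      simp [h1, h2, hA, hB, stmt9_ueven, stmt9_uodd, hKi, hKj, even_neg, odd_neg,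
        Even.add, Odd.add_even, Even.add_odd, Odd.add_odd, mul_pow,
        mul_comm, mul_left_comm, mul_assoc, Int.units_mul_self, stmt9_mms,
        stmt9_nsq, stmt9_nsq']
  · rcases Int.units_eq_one_or (η i) with h1 | h1 <;>
    rcases Int.units_eq_one_or (η j) with h2 | h2 <;>
    simp only [h1, h2, stmt9_uodd, stmt9_ueven, hA, hB, stmt9_odd_two_add, stmt9_odd_add_two,
      even_neg, odd_neg, pow_add, mul_pow, one_pow, one_mul, mul_one, one_zpow,
      Int.units_mul_self, stmt9_mms] <;>
    simp [mul_comm, mul_left_comm, mul_assoc, Int.units_mul_self, Int.units_sq, stmt9_uz2,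
      neg_neg, stmt9_mms, stmt9_nsq, stmt9_nsq']

end aux

/-- Fix a subset `S` of the simple roots (vertices `Fin l`) of a
semisimple root system with Cartan matrix `C`.  The prescription
`s_{α_i} : (η, o) ↦ (η', (η_i)^{r_i} o)` with `η'_j = η_j η_i^{-C_{j,i}}` for `j ∈ S`
(and `η'_j = η_j` otherwise), where `r_i = #{α_j ∉ S : C_{j,i} odd}`, respects all
Coxeter relations of `W_S`: each `T_i` (for `i ∈ S`) is an involution and
`(T_i ∘ T_j)` has order dividing `m_{ij} ∈ {2,3,4,6}` determined by
`C_{i,j}·C_{j,i} ∈ {0,1,2,3}`.  Hence it defines a `W_S`-action on the pairs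
`(η, o)` (colored diagrams with orientation). -/
theorem stmt9 (l : ℕ) (C : Matrix (Fin l) (Fin l) ℤ)
    (hdiag : ∀ i, C i i = 2)
    (hoff : ∀ i j, i ≠ j → C i j ≤ 0)
    (hzero : ∀ i j, (C i j = 0 ↔ C j i = 0))
    (hcrys : ∀ i j, i ≠ j → C i j * C j i ≤ 3)
    (S : Finset (Fin l))
    (r : Fin l → ℕ)
    (hr : ∀ i, r i = Nat.card {j : Fin l // j ∉ S ∧ Odd (C j i)})
    (T : Fin l → ((Fin l → ℤˣ) × ℤˣ) → ((Fin l → ℤˣ) × ℤˣ))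
    (hT : ∀ i p, T i p =
      (fun j => if j ∈ S then p.1 j * (p.1 i) ^ (-(C j i)) else p.1 j,
        (p.1 i) ^ (r i) * p.2)) :
    (∀ i ∈ S, T i ∘ T i = id) ∧
    (∀ i ∈ S, ∀ j ∈ S, i ≠ j →
      (T i ∘ T j)^[if C i j * C j i = 0 then 2
        else if C i j * C j i = 1 then 3
        else if C i j * C j i = 2 then 4 else 6] = id) := by
  constructor
  · intro i hi
    funext p
    obtain ⟨η, o⟩ := p
    simp only [Function.comp_apply, hT, id_eq, hi, if_true, hdiag]
    rw [Prod.mk.injEq]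
    constructor
    · funext j
      by_cases hj : j ∈ S <;>
        simp [hj, stmt9_uz2, stmt9_mul_zsq, ← mul_assoc, stmt9_nsq]
    · simp [stmt9_uz2, ← mul_assoc, stmt9_nsq]
  · intro i hi j hj hij
    have hA1 := hoff i j hij
    have hB1 := hoff j i (Ne.symm hij)
    have hc := hcrys i j hij
    by_cases h0 : C i j = 0
    · have h0' : C j i = 0 := (hzero i j).mp h0
      have hm : (if C i j * C j i = 0 then 2
          else if C i j * C j i = 1 then 3
          else if C i j * C j i = 2 then 4 else 6) = 2 := by
        rw [h0, zero_mul]; norm_num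
      rw [hm]
      exact stmt9_braid hdiag hT i j hi hj 2 0 0 h0 h0' (Or.inl ⟨rfl, rfl, rfl⟩)
    · have h0' : C j i ≠ 0 := fun h => h0 ((hzero i j).mpr h)
      have hA2 : C i j ≤ -1 := by omega
      have hB2 : C j i ≤ -1 := by omega
      have hAb : -3 ≤ C i j := by nlinarith
      rcases (show C i j = -1 ∨ C i j = -2 ∨ C i j = -3 by omega) with hA | hA | hA <;>
        rw [hA] at hc
      · rcases (show C j i = -1 ∨ C j i = -2 ∨ C j i = -3 by omega) with hB | hB | hB
        · have hm : (if C i j * C j i = 0 then 2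
              else if C i j * C j i = 1 then 3
              else if C i j * C j i = 2 then 4 else 6) = 3 := by
            rw [hA, hB]; norm_num
          rw [hm]
          exact stmt9_braid hdiag hT i j hi hj 3 (-1) (-1) hA hB
            (Or.inr (Or.inl ⟨rfl, rfl, rfl⟩))
        · have hm : (if C i j * C j i = 0 then 2
              else if C i j * C j i = 1 then 3
              else if C i j * C j i = 2 then 4 else 6) = 4 := by
            rw [hA, hB]; norm_num
          rw [hm]
          exact stmt9_braid hdiag hT i j hi hj 4 (-1) (-2) hA hB
            (Or.inr (Or.inr (Or.inl ⟨rfl, rfl, rfl⟩)))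
        · have hm : (if C i j * C j i = 0 then 2
              else if C i j * C j i = 1 then 3
              else if C i j * C j i = 2 then 4 else 6) = 6 := by
            rw [hA, hB]; norm_num
          rw [hm]
          exact stmt9_braid6 hdiag hT i j hi hj (by rw [hA]; decide)
            (by rw [hB]; decide)
      · have hB : C j i = -1 := by omega
        have hm : (if C i j * C j i = 0 then 2
            else if C i j * C j i = 1 then 3
            else if C i j * C j i = 2 then 4 else 6) = 4 := by
          rw [hA, hB]; norm_num
        rw [hm]
        exact stmt9_braid hdiag hT i j hi hj 4 (-2) (-1) hA hB
          (Or.inr (Or.inr (Or.inr ⟨rfl, rfl, rfl⟩)))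
      · have hB : C j i = -1 := by omega
        have hm : (if C i j * C j i = 0 then 2
            else if C i j * C j i = 1 then 3
            else if C i j * C j i = 2 then 4 else 6) = 6 := by
          rw [hA, hB]; norm_num
        rw [hm]
        exact stmt9_braid6 hdiag hT i j hi hj (by rw [hA]; decide)
          (by rw [hB]; decide)
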